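/- Let Q be a full Picard subcategory of a Picard category X, and let H be a groupoid on which X acts simply transitively. Then the 2-categorical quotient H/Q is equivalent to a set, and the abelian group X/Q acts simply transitively on this set. -/
import Mathlib


open CategoryTheory MonoidalCategory

/-- let `Q` be a full Picard subcategory of a Picard category `X` (a symmetric
monoidal groupoid with all objects invertible, `Q` determined by a class of objects `Qset`
containing the unit and closed under tensor, inverses and isomorphism), and let `H` be a
groupoid on which `X` acts simply transitively: the action functor `act : X × H ⥤ H` is
compatible with the tensor structure, is transitive (`∀ h₁ h₂, ∃ x, x·h₁ ≅ h₂`), and for all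
`x₁, x₂, h` the map `Hom_X(x₁, x₂) → Hom_H(x₁·h, x₂·h)` is bijective.  Then the relation
`rH` on `H` identifying `h₁ ∼ h₂` when there are `q` in `Q` and a morphism `q·h₁ → h₂` is an
equivalence relation — so the 2-categorical quotient `H/Q` is equivalent to the set
`Quot rH` — and the abelian group `X/Q = Quot rX` (from the previous lemma) acts on it,
the action being induced by `act` and simply transitive. -/
theorem stmt2 {X H : Type*} [Groupoid X] [Groupoid H]
    [MonoidalCategory X] [SymmetricCategory X]
    (hPic : ∀ x : X, ∃ x' : X, Nonempty (x ⊗ x' ≅ 𝟙_ X))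
    (Qset : Set X)
    (hQone : 𝟙_ X ∈ Qset)
    (hQmul : ∀ q q' : X, q ∈ Qset → q' ∈ Qset → q ⊗ q' ∈ Qset)
    (hQinv : ∀ q q' : X, q ∈ Qset → Nonempty (q ⊗ q' ≅ 𝟙_ X) → q' ∈ Qset)
    (hQiso : ∀ q x : X, q ∈ Qset → Nonempty (q ≅ x) → x ∈ Qset)
    (act : X × H ⥤ H)
    (hunit : ∀ h : H, Nonempty (act.obj (𝟙_ X, h) ≅ h))
    (hassoc : ∀ (x y : X) (h : H),
      Nonempty (act.obj (x ⊗ y, h) ≅ act.obj (x, act.obj (y, h))))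
    (htrans : ∀ h₁ h₂ : H, ∃ x : X, Nonempty (act.obj (x, h₁) ≅ h₂))
    (hff : ∀ (x₁ x₂ : X) (h : H),
      Function.Bijective (fun f : (x₁ ⟶ x₂) =>
        act.map ((f, 𝟙 h) : ((x₁, h) : X × H) ⟶ (x₂, h))))
    (rX : X → X → Prop)
    (hrX : ∀ x₁ x₂ : X, rX x₁ x₂ ↔ ∃ q ∈ Qset, Nonempty ((q ⊗ x₁) ≅ x₂))
    (rH : H → H → Prop)
    (hrH : ∀ h₁ h₂ : H, rH h₁ h₂ ↔ ∃ q ∈ Qset, Nonempty (act.obj (q, h₁) ≅ h₂)) :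
    Equivalence rH ∧
      ∃ smul : Quot rX → Quot rH → Quot rH,
        (∀ (x : X) (h : H),
          smul (Quot.mk rX x) (Quot.mk rH h) = Quot.mk rH (act.obj (x, h))) ∧
        (∀ a b : Quot rH, ∃! g : Quot rX, smul g a = b) := by

  have actIsoX : ∀ {x x' : X} (h : H), (x ≅ x') → (act.obj (x, h) ≅ act.obj (x', h)) :=
    fun {x x'} h e => asIso (act.map ((e.hom, 𝟙 h) : ((x, h) : X × H) ⟶ (x', h)))
  have actIsoH : ∀ (x : X) {h h' : H}, (h ≅ h') → (act.obj (x, h) ≅ act.obj (x, h')) :=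
    fun x {h h'} e => asIso (act.map ((𝟙 x, e.hom) : ((x, h) : X × H) ⟶ (x, h')))
  have hequiv : Equivalence rH := by
    constructor
    · intro h
      rw [hrH]
      exact ⟨𝟙_ X, hQone, hunit h⟩
    · intro h₁ h₂ hr
      rw [hrH] at hr ⊢
      obtain ⟨q, hq, ⟨e⟩⟩ := hr
      obtain ⟨q', ⟨e'⟩⟩ := hPic q
      refine ⟨q', hQinv q q' hq ⟨e'⟩, ⟨?_⟩⟩
      calc act.obj (q', h₂) ≅ act.obj (q', act.obj (q, h₁)) := actIsoH q' e.symm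
        _ ≅ act.obj (q' ⊗ q, h₁) := (hassoc q' q h₁).some.symm
        _ ≅ act.obj (q ⊗ q', h₁) := actIsoX h₁ (β_ q' q)
        _ ≅ act.obj (𝟙_ X, h₁) := actIsoX h₁ e'
        _ ≅ h₁ := (hunit h₁).some
    · intro h₁ h₂ h₃ hr hr'
      rw [hrH] at hr hr' ⊢
      obtain ⟨q, hq, ⟨e⟩⟩ := hr
      obtain ⟨q', hq', ⟨e'⟩⟩ := hr'
      refine ⟨q' ⊗ q, hQmul q' q hq' hq, ⟨?_⟩⟩
      calc act.obj (q' ⊗ q, h₁) ≅ act.obj (q', act.obj (q, h₁)) := (hassoc q' q h₁).some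
        _ ≅ act.obj (q', h₂) := actIsoH q' e
        _ ≅ h₃ := e'
  have keyH : ∀ (x : X) (h₁ h₂ : H), rH h₁ h₂ → rH (act.obj (x, h₁)) (act.obj (x, h₂)) := by
    intro x h₁ h₂ hr
    rw [hrH] at hr ⊢
    obtain ⟨q, hq, ⟨e⟩⟩ := hr
    refine ⟨q, hq, ⟨?_⟩⟩
    calc act.obj (q, act.obj (x, h₁)) ≅ act.obj (q ⊗ x, h₁) := (hassoc q x h₁).some.symm
      _ ≅ act.obj (x ⊗ q, h₁) := actIsoX h₁ (β_ q x)
      _ ≅ act.obj (x, act.obj (q, h₁)) := (hassoc x q h₁).some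
      _ ≅ act.obj (x, h₂) := actIsoH x e
  have keyX : ∀ (x₁ x₂ : X) (h : H), rX x₁ x₂ → rH (act.obj (x₁, h)) (act.obj (x₂, h)) := by
    intro x₁ x₂ h hr
    rw [hrX] at hr
    rw [hrH]
    obtain ⟨q, hq, ⟨e⟩⟩ := hr
    refine ⟨q, hq, ⟨?_⟩⟩
    calc act.obj (q, act.obj (x₁, h)) ≅ act.obj (q ⊗ x₁, h) := (hassoc q x₁ h).some.symm
      _ ≅ act.obj (x₂, h) := actIsoX h e
  refine ⟨hequiv, ?_⟩
  have mkEq : ∀ {a b : H}, Quot.mk rH a = Quot.mk rH b → rH a b := fun {a b} hab =>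
    (hequiv.eqvGen_iff).mp (Quot.eq.mp hab)
  refine ⟨fun gx => Quot.lift
      (fun x => Quot.map (fun h => act.obj (x, h)) (keyH x))
      (fun x₁ x₂ hx => funext fun gh => by
        induction gh using Quot.ind with
        | _ h => exact Quot.sound (keyX x₁ x₂ h hx)) gx,
    fun x h => rfl, ?_⟩
  intro a b
  induction a using Quot.ind with | _ h₁ =>
  induction b using Quot.ind with | _ h₂ =>
  obtain ⟨x, ⟨e⟩⟩ := htrans h₁ h₂
  have hx : Quot.mk rH (act.obj (x, h₁)) = Quot.mk rH h₂ :=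
    Quot.sound ((hrH _ _).2 ⟨𝟙_ X, hQone, ⟨(hunit _).some ≪≫ e⟩⟩)
  refine ⟨Quot.mk rX x, hx, ?_⟩
  intro y hy
  induction y using Quot.ind with | _ x' =>
  have h1 : rH (act.obj (x', h₁)) (act.obj (x, h₁)) :=
    hequiv.trans (mkEq hy) (hequiv.symm (mkEq hx))
  rw [hrH] at h1
  obtain ⟨q, hq, ⟨e'⟩⟩ := h1
  have e2 : act.obj (q ⊗ x', h₁) ≅ act.obj (x, h₁) :=
    (hassoc q x' h₁).some ≪≫ e'
  obtain ⟨f, hf⟩ := (hff (q ⊗ x') x h₁).2 e2.hom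
  exact Quot.sound ((hrX x' x).2 ⟨q, hq, ⟨asIso f⟩⟩)
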